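/- Let (Ω, 𝒜, P) be a probability space, X : Ω → 𝒳 a measurable map into a measurable space 𝒳, and 𝒢 = σ(X). Let ℋ = σ(X, T) denote the σ-algebra generated jointly by X and a square-integrable random variable T. Suppose the outcome follows the partially linear model Y = θ(X)·T + g(X) + γ, where θ, g : 𝒳 → ℝ are measurable with θ∘X bounded, g∘X and γ square-integrable, and E[γ | ℋ] = 0 almost surely. Then almost surely, E[(Y − E[Y | 𝒢])·(T − E[T | 𝒢]) | 𝒢] = θ(X)·E[(T − E[T | 𝒢])² | 𝒢]; that is, the conditional covariance of Y and T given X equals θ(X) times the conditional variance of T given X. -/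

import Mathlib

open MeasureTheory ProbabilityTheory

/-- The σ-algebra generated by a map `X`. -/
abbrev sigmaGen {Ω 𝒳 : Type*} [MeasurableSpace 𝒳] (X : Ω → 𝒳) : MeasurableSpace Ω :=
  MeasurableSpace.comap X inferInstance

/-- The σ-algebra generated jointly by `X` and `T`. -/
abbrev sigmaGen₂ {Ω 𝒳 : Type*} [MeasurableSpace 𝒳] (X : Ω → 𝒳) (T : Ω → ℝ) :
    MeasurableSpace Ω :=
  MeasurableSpace.comap (fun ω => (X ω, T ω)) inferInstance

lemma memLp_two_condexp_aux {Ω : Type*} {m m0 : MeasurableSpace Ω} (hm : m ≤ m0)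
    (P : Measure Ω) [IsFiniteMeasure P] {f : Ω → ℝ} (hf : MemLp f 2 P) :
    MemLp (P[f|m]) 2 P := by
  haveI : SigmaFinite (P.trim hm) := inferInstance
  set F := hf.toLp f with hF
  have hg : MemLp (fun ω => (condExpL2 ℝ ℝ hm F : Ω →₂[P] ℝ) ω) 2 P := Lp.memLp _
  have heq : (fun ω => (condExpL2 ℝ ℝ hm F : Ω →₂[P] ℝ) ω) =ᵐ[P] P[f|m] := by
    refine ae_eq_condExp_of_forall_setIntegral_eq hm (hf.integrable one_le_two)
      (fun s _ _ => (hg.integrable one_le_two).integrableOn) (fun s hs hμs => ?_)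
      (aestronglyMeasurable_condExpL2 hm F)
    rw [integral_condExpL2_eq hm F hs hμs.ne]
    exact setIntegral_congr_ae (hm s hs) ((hf.coeFn_toLp).mono fun x hx _ => hx)
  exact hg.ae_eq heq

lemma integrable_mul_of_memLp_two {Ω : Type*} {m0 : MeasurableSpace Ω}
    {P : Measure Ω} {f g : Ω → ℝ} (hf : MemLp f 2 P) (hg : MemLp g 2 P) :
    Integrable (fun ω => f ω * g ω) P := by
  refine Integrable.mono' (((hf.integrable_sq.add hg.integrable_sq)).div_const 2)
    (hf.aestronglyMeasurable.mul hg.aestronglyMeasurable) ?_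
  refine Filter.Eventually.of_forall fun ω => ?_
  have h := sq_nonneg (|f ω| - |g ω|)
  rw [Real.norm_eq_abs, abs_mul]
  simp only [Pi.div_apply, Pi.add_apply]
  nlinarith [sq_abs (f ω), sq_abs (g ω)]

/-- **Conditional covariance identity in the partially linear model.**
If `Y = θ(X)·T + g(X) + γ` with `E[γ | σ(X,T)] = 0` a.s., then the conditional covariance
of `Y` and `T` given `σ(X)` equals `θ(X)` times the conditional variance of `T` given `σ(X)`. -/
theorem partially_linear_conditional_covariance
    {Ω 𝒳 : Type*} [MeasurableSpace Ω] [MeasurableSpace 𝒳]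
    (P : Measure Ω) [IsProbabilityMeasure P]
    (X : Ω → 𝒳) (hX : Measurable X)
    (T : Ω → ℝ) (hT : Measurable T) (hT2 : MemLp T 2 P)
    (θ g : 𝒳 → ℝ) (hθ : Measurable θ) (hg : Measurable g)
    (C : ℝ) (hθbdd : ∀ ω, |θ (X ω)| ≤ C)
    (hgX2 : MemLp (fun ω => g (X ω)) 2 P)
    (γ : Ω → ℝ) (hγ2 : MemLp γ 2 P)
    (hγmean : P[γ | sigmaGen₂ X T] =ᵐ[P] 0)
    (Y : Ω → ℝ) (hYdef : ∀ ω, Y ω = θ (X ω) * T ω + g (X ω) + γ ω) :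
    P[fun ω => (Y ω - (P[Y | sigmaGen X]) ω) * (T ω - (P[T | sigmaGen X]) ω) | sigmaGen X]
      =ᵐ[P] fun ω =>
        θ (X ω) * (P[fun ω' => (T ω' - (P[T | sigmaGen X]) ω') ^ 2 | sigmaGen X]) ω := by
  have hm := hX.comap_le
  have hm₂ := (hX.prodMk hT).comap_le
  have hmm₂ : sigmaGen X ≤ sigmaGen₂ X T := fun s hs => by
    obtain ⟨t, ht, rfl⟩ := hs
    exact ⟨Prod.fst ⁻¹' t, measurable_fst ht, rfl⟩
  set m : MeasurableSpace Ω := sigmaGen X with hm_def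
  set m₂ : MeasurableSpace Ω := sigmaGen₂ X T with hm₂_def
  haveI : SigmaFinite (P.trim hm) := inferInstance
  haveI : SigmaFinite (P.trim hm₂) := inferInstance
  -- measurability
  have hXm : Measurable[m] X := Measurable.of_comap_le le_rfl
  have hθXm : StronglyMeasurable[m] (fun ω => θ (X ω)) := (hθ.comp hXm).stronglyMeasurable
  have hgXm : StronglyMeasurable[m] (fun ω => g (X ω)) := (hg.comp hXm).stronglyMeasurable
  have hpairm₂ : Measurable[m₂] (fun ω => (X ω, T ω)) := Measurable.of_comap_le le_rfl
  have hTm₂ : Measurable[m₂] T := measurable_snd.comp hpairm₂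
  -- τ and T̃
  set τ : Ω → ℝ := P[T|m] with hτ_def
  have hτ2 : MemLp τ 2 P := memLp_two_condexp_aux hm P hT2
  set Tt : Ω → ℝ := fun ω => T ω - τ ω with hTt_def
  have hTt2 : MemLp Tt 2 P := hT2.sub hτ2
  have hTtm₂ : StronglyMeasurable[m₂] Tt :=
    hTm₂.stronglyMeasurable.sub (stronglyMeasurable_condExp.mono hmm₂)
  -- integrability
  have hTint : Integrable T P := hT2.integrable one_le_two
  have hγint : Integrable γ P := hγ2.integrable one_le_two
  have hgXint : Integrable (fun ω => g (X ω)) P := hgX2.integrable one_le_two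
  have hθbdd' : ∀ᵐ ω ∂P, ‖θ (X ω)‖ ≤ C := Filter.Eventually.of_forall fun ω => hθbdd ω
  have hθT_int : Integrable (fun ω => θ (X ω) * T ω) P :=
    hTint.bdd_mul (hθXm.mono hm).aestronglyMeasurable hθbdd'
  have hTtsq_int : Integrable (fun ω => Tt ω * Tt ω) P :=
    integrable_mul_of_memLp_two hTt2 hTt2
  have hθTtsq_int : Integrable (fun ω => θ (X ω) * (Tt ω * Tt ω)) P :=
    hTtsq_int.bdd_mul (hθXm.mono hm).aestronglyMeasurable hθbdd'
  have hγTt_int : Integrable (fun ω => Tt ω * γ ω) P :=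
    integrable_mul_of_memLp_two hTt2 hγ2
  -- E[γ|m] = 0
  have hγm : P[γ|m] =ᵐ[P] 0 := by
    have h1 : P[P[γ|m₂]|m] =ᵐ[P] P[γ|m] := condExp_condExp_of_le hmm₂ hm₂
    have h2 : P[P[γ|m₂]|m] =ᵐ[P] P[(0 : Ω → ℝ)|m] := condExp_congr_ae hγmean
    refine h1.symm.trans (h2.trans ?_)
    rw [condExp_zero]
  -- E[Y|m]
  have hYcond : P[Y|m] =ᵐ[P] fun ω => θ (X ω) * τ ω + g (X ω) := by
    have hYfun : Y = fun ω => θ (X ω) * T ω + g (X ω) + γ ω := funext hYdef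
    rw [hYfun]
    have hsum : P[fun ω => (θ (X ω) * T ω + g (X ω)) + γ ω|m]
        =ᵐ[P] P[fun ω => θ (X ω) * T ω + g (X ω)|m] + P[γ|m] :=
      condExp_add (hθT_int.add hgXint) hγint m
    have hsum2 : P[fun ω => θ (X ω) * T ω + g (X ω)|m]
        =ᵐ[P] P[fun ω => θ (X ω) * T ω|m] + P[fun ω => g (X ω)|m] :=
      condExp_add hθT_int hgXint m
    have hmul : P[fun ω => θ (X ω) * T ω|m] =ᵐ[P] fun ω => θ (X ω) * τ ω :=
      condExp_mul_of_stronglyMeasurable_left hθXm hθT_int hTint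
    have hgfix : P[fun ω => g (X ω)|m] = fun ω => g (X ω) :=
      condExp_of_stronglyMeasurable hm hgXm hgXint
    filter_upwards [hsum, hsum2, hmul, hγm] with ω h1 h2 h3 h4
    simp only [Pi.add_apply, Pi.zero_apply] at *
    rw [h1, h2, h3, hgfix, h4, add_zero]
  -- the product function equals the nice form a.e.
  have hprod : (fun ω => (Y ω - (P[Y|m]) ω) * (T ω - (P[T|m]) ω))
      =ᵐ[P] fun ω => θ (X ω) * (Tt ω * Tt ω) + Tt ω * γ ω := by
    filter_upwards [hYcond] with ω h
    rw [hYdef ω, h]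
    simp only [hTt_def, hτ_def]
    ring
  -- E[γ·T̃|m] = 0
  have hγTtm : P[fun ω => Tt ω * γ ω|m] =ᵐ[P] 0 := by
    have htower : P[P[fun ω => Tt ω * γ ω|m₂]|m] =ᵐ[P] P[fun ω => Tt ω * γ ω|m] :=
      condExp_condExp_of_le hmm₂ hm₂
    have hpull : P[fun ω => Tt ω * γ ω|m₂] =ᵐ[P] fun ω => Tt ω * (P[γ|m₂]) ω :=
      condExp_mul_of_stronglyMeasurable_left hTtm₂ hγTt_int hγint
    have hz : P[fun ω => Tt ω * γ ω|m₂] =ᵐ[P] 0 := by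
      filter_upwards [hpull, hγmean] with ω h1 h2
      simp only [Pi.zero_apply] at *
      rw [h1, h2, mul_zero]
    have h2 : P[P[fun ω => Tt ω * γ ω|m₂]|m] =ᵐ[P] P[(0 : Ω → ℝ)|m] := condExp_congr_ae hz
    refine htower.symm.trans (h2.trans ?_)
    rw [condExp_zero]
  -- pull out θ(X)
  have hmain : P[fun ω => θ (X ω) * (Tt ω * Tt ω)|m]
      =ᵐ[P] fun ω => θ (X ω) * (P[fun ω' => Tt ω' * Tt ω'|m]) ω :=
    condExp_mul_of_stronglyMeasurable_left hθXm hθTtsq_int hTtsq_int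
  -- combine
  have hsplit : P[fun ω => θ (X ω) * (Tt ω * Tt ω) + Tt ω * γ ω|m]
      =ᵐ[P] P[fun ω => θ (X ω) * (Tt ω * Tt ω)|m] + P[fun ω => Tt ω * γ ω|m] :=
    condExp_add hθTtsq_int hγTt_int m
  have hsq : (fun ω' => (T ω' - (P[T|m]) ω') ^ 2) = fun ω' => Tt ω' * Tt ω' := by
    funext ω'; rw [hTt_def]; ring
  calc P[fun ω => (Y ω - (P[Y|m]) ω) * (T ω - (P[T|m]) ω)|m]
      =ᵐ[P] P[fun ω => θ (X ω) * (Tt ω * Tt ω) + Tt ω * γ ω|m] := condExp_congr_ae hprod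
    _ =ᵐ[P] fun ω => θ (X ω) * (P[fun ω' => (T ω' - (P[T|m]) ω') ^ 2|m]) ω := by
        rw [hsq]
        filter_upwards [hsplit, hmain, hγTtm] with ω h1 h2 h3
        simp only [Pi.add_apply, Pi.zero_apply] at *
        rw [h1, h2, h3, add_zero]
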